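/- Let (H_k)_{k≥0} be a sequence of nonnegative C¹ functions on [0,∞) with H_k(0) = 0 and H_k'(t) ≤ C·H_k(t) + H_{k+1}(t) for all k and t ≥ 0, where C > 0 is independent of k. Then for every p ≥ 1 and t ≥ 0, H_0(t) ≤ (1/(p−1)!) ∫_0^t (t−s)^{p−1} e^{C(t−s)} H_p(s) ds. -/

import Mathlib

open intervalIntegral

private lemma ftc_cont {f : ℝ → ℝ} (hf : Continuous f) (a t : ℝ) :
    HasDerivAt (fun u => ∫ s in a..u, f s) (f t) t :=
  (hf.integral_hasStrictDerivAt a t).hasDerivAt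

private lemma prim_cont {f : ℝ → ℝ} (hf : Continuous f) (a : ℝ) :
    Continuous (fun u => ∫ s in a..u, f s) :=
  intervalIntegral.continuous_primitive (fun a b => hf.intervalIntegrable a b) a

/-- Comparison: continuous on `[0,∞)`, nonneg derivative on `(0,∞)` implies `f 0 ≤ f t`. -/
private lemma mono_aux {f f' : ℝ → ℝ} (hc : ContinuousOn f (Set.Ici 0))
    (hd : ∀ x, 0 < x → HasDerivAt f (f' x) x)
    (h0 : ∀ x, 0 < x → 0 ≤ f' x) : ∀ t, 0 ≤ t → f 0 ≤ f t := by
  intro t ht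
  have hmem : ∀ x ∈ interior (Set.Ici (0:ℝ)), 0 < x := by
    intro x hx; rwa [interior_Ici, Set.mem_Ioi] at hx
  have hmono := monotoneOn_of_deriv_nonneg (convex_Ici 0) hc
    (fun x hx => ((hd x (hmem x hx)).differentiableAt).differentiableWithinAt)
    (fun x hx => by rw [(hd x (hmem x hx)).deriv]; exact h0 x (hmem x hx))
  exact hmono Set.self_mem_Ici ht ht

private noncomputable def gfun (H' : ℕ → ℝ → ℝ) (C : ℝ) (k : ℕ) (s : ℝ) : ℝ :=
  Real.exp (-(C*s)) * ∫ u in (0:ℝ)..s, H' k u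

private noncomputable def Bfun (H' : ℕ → ℝ → ℝ) (C : ℝ) (j k : ℕ) (t : ℝ) : ℝ :=
  ∫ s in (0:ℝ)..t, (-s)^j * gfun H' C k s

private noncomputable def Lfun (H' : ℕ → ℝ → ℝ) (C : ℝ) (p k : ℕ) (t : ℝ) : ℝ :=
  ∫ s in (0:ℝ)..t, (t-s)^p * gfun H' C k s

section
variable {H' : ℕ → ℝ → ℝ} {C : ℝ} (hcont : ∀ k, Continuous (H' k))
include hcont

private lemma g_cont (k : ℕ) : Continuous (gfun H' C k) :=
  (Real.continuous_exp.comp (continuous_const.mul continuous_id).neg).mul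
    (prim_cont (hcont k) 0)

private lemma Bint_cont (j k : ℕ) : Continuous (fun s => (-s)^j * gfun H' C k s) :=
  (continuous_neg.pow j).mul (g_cont hcont k)

private lemma B_deriv (j k : ℕ) (t : ℝ) :
    HasDerivAt (Bfun H' C j k) ((-t)^j * gfun H' C k t) t :=
  ftc_cont (Bint_cont hcont j k) 0 t

private lemma B_cont (j k : ℕ) : Continuous (Bfun H' C j k) :=
  prim_cont (Bint_cont hcont j k) 0

private lemma L_rep (p k : ℕ) (t : ℝ) :
    Lfun H' C p k t
      = ∑ i ∈ Finset.range (p+1), ((p.choose i : ℝ) * t^i) * Bfun H' C (p-i) k t := by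
  have h1 : Lfun H' C p k t
      = ∫ s in (0:ℝ)..t, ∑ i ∈ Finset.range (p+1),
          ((p.choose i : ℝ) * t^i) * ((-s)^(p-i) * gfun H' C k s) := by
    unfold Lfun
    congr 1
    funext s
    rw [sub_eq_add_neg, add_pow, Finset.sum_mul]
    exact Finset.sum_congr rfl fun i _ => by ring
  rw [h1, intervalIntegral.integral_finset_sum]
  · exact Finset.sum_congr rfl fun i _ => by
      rw [intervalIntegral.integral_const_mul]; rfl
  · exact fun i _ =>
      (continuous_const.mul (Bint_cont hcont (p-i) k)).intervalIntegrable 0 t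

private lemma L_cont (p k : ℕ) : Continuous (fun t => Lfun H' C p k t) := by
  have : (fun t => Lfun H' C p k t)
      = fun t => ∑ i ∈ Finset.range (p+1), ((p.choose i : ℝ) * t^i) * Bfun H' C (p-i) k t :=
    funext fun t => L_rep hcont p k t
  rw [this]
  exact continuous_finset_sum _ fun i _ =>
    (continuous_const.mul (continuous_pow i)).mul (B_cont hcont (p-i) k)

private lemma L_zero (p k : ℕ) : Lfun H' C p k 0 = 0 := by
  unfold Lfun; exact intervalIntegral.integral_same

private lemma L0_deriv (k : ℕ) (t : ℝ) :
    HasDerivAt (fun u => Lfun H' C 0 k u) (gfun H' C k t) t := by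
  have : (fun u => Lfun H' C 0 k u) = fun u => ∫ s in (0:ℝ)..u, gfun H' C k s := by
    funext u; unfold Lfun; simp
  rw [this]
  exact ftc_cont (g_cont hcont k) 0 t

private lemma L_deriv (p k : ℕ) (t : ℝ) :
    HasDerivAt (fun u => Lfun H' C (p+1) k u) (((p:ℝ)+1) * Lfun H' C p k t) t := by
  have hrep : (fun u => Lfun H' C (p+1) k u)
      = fun u => ∑ i ∈ Finset.range (p+2), (((p+1).choose i : ℝ) * u^i) * Bfun H' C (p+1-i) k u :=
    funext fun u => L_rep hcont (p+1) k u
  rw [hrep]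
  have hterm : ∀ i ∈ Finset.range (p+2),
      HasDerivAt (fun u => (((p+1).choose i : ℝ) * u^i) * Bfun H' C (p+1-i) k u)
        (((p+1).choose i : ℝ) * ((i:ℝ) * t^(i-1)) * Bfun H' C (p+1-i) k t
          + (((p+1).choose i : ℝ) * t^i) * ((-t)^(p+1-i) * gfun H' C k t)) t := by
    intro i _
    exact ((hasDerivAt_pow i t).const_mul _).mul (B_deriv hcont (p+1-i) k t)
  have hsum := HasDerivAt.fun_sum hterm
  refine hsum.congr_deriv ?_
  rw [Finset.sum_add_distrib]
  have hzero : ∑ i ∈ Finset.range (p+2),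
      (((p+1).choose i : ℝ) * t^i) * ((-t)^(p+1-i) * gfun H' C k t) = 0 := by
    have : ∑ i ∈ Finset.range (p+2),
        (((p+1).choose i : ℝ) * t^i) * ((-t)^(p+1-i) * gfun H' C k t)
        = (∑ i ∈ Finset.range (p+2), t^i * (-t)^(p+1-i) * ((p+1).choose i : ℝ))
            * gfun H' C k t := by
      rw [Finset.sum_mul]; exact Finset.sum_congr rfl fun i _ => by ring
    rw [this, ← add_pow]
    simp
  rw [hzero, add_zero]
  have hfirst : ∑ i ∈ Finset.range (p+2),
      ((p+1).choose i : ℝ) * ((i:ℝ) * t^(i-1)) * Bfun H' C (p+1-i) k t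
      = ((p:ℝ)+1) * Lfun H' C p k t := by
    rw [Finset.sum_range_succ', L_rep hcont p k t, Finset.mul_sum]
    have h00 : ((p+1).choose 0 : ℝ) * (((0:ℕ):ℝ) * t^(0-1)) * Bfun H' C (p+1-0) k t = 0 := by
      simp
    rw [h00, add_zero]
    refine Finset.sum_congr rfl fun j _ => ?_
    have hch : (((p+1).choose (j+1) : ℕ) : ℝ) * (((j:ℕ):ℝ)+1) = ((p:ℝ)+1) * (p.choose j : ℝ) := by
      exact_mod_cast (Nat.add_one_mul_choose_eq p j).symm
    have hsub : p + 1 - (j + 1) = p - j := by omega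
    rw [hsub]
    push_cast
    linear_combination (t ^ j * Bfun H' C (p - j) k t) * hch
  rw [hfirst]
end

/-- Iterated Gronwall lemma: if `H_k(0) = 0` and `H_k' ≤ C H_k + H_{k+1}`, then
`H_0(t) ≤ (1/(p-1)!) ∫_0^t (t-s)^{p-1} e^{C(t-s)} H_p(s) ds`. -/
theorem iterated_gronwall (H H' : ℕ → ℝ → ℝ) (C : ℝ) (hC : 0 < C)
    (hderiv : ∀ k t, 0 ≤ t → HasDerivAt (H k) (H' k t) t)
    (hcont : ∀ k, Continuous (H' k))
    (hnonneg : ∀ k t, 0 ≤ t → 0 ≤ H k t)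
    (hineq : ∀ k t, 0 ≤ t → H' k t ≤ C * H k t + H (k+1) t)
    (hzero : ∀ k, H k 0 = 0) :
    ∀ p : ℕ, 1 ≤ p → ∀ t : ℝ, 0 ≤ t →
      H 0 t ≤ (1 / ((p-1).factorial : ℝ)) *
        ∫ s in (0:ℝ)..t, (t-s)^(p-1) * Real.exp (C*(t-s)) * H p s := by
  -- the global-continuous primitive `G` agrees with `H` on `[0,∞)`
  set G : ℕ → ℝ → ℝ := fun k t => ∫ s in (0:ℝ)..t, H' k s with hGdef
  have hGd : ∀ k t, HasDerivAt (G k) (H' k t) t := fun k t => ftc_cont (hcont k) 0 t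
  have hGc : ∀ k, Continuous (G k) := fun k => prim_cont (hcont k) 0
  have hG0 : ∀ k, G k 0 = 0 := fun k => intervalIntegral.integral_same
  have hGH : ∀ k t, 0 ≤ t → G k t = H k t := by
    intro k t ht
    have hHc : ContinuousOn (H k) (Set.Ici 0) := fun x hx =>
      ((hderiv k x hx).continuousAt).continuousWithinAt
    have h1 := mono_aux (f := fun u => G k u - H k u) (f' := fun _ => (0:ℝ))
      (((hGc k).continuousOn).sub hHc)
      (fun x hx => by
        have := (hGd k x).sub (hderiv k x hx.le)
        rwa [sub_self] at this)
      (fun x _ => le_refl 0) t ht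
    have h2 := mono_aux (f := fun u => H k u - G k u) (f' := fun _ => (0:ℝ))
      (hHc.sub ((hGc k).continuousOn))
      (fun x hx => by
        have := (hderiv k x hx.le).sub (hGd k x)
        rwa [sub_self] at this)
      (fun x _ => le_refl 0) t ht
    have e0 : G k 0 = 0 := hG0 k
    have e1 : H k 0 = 0 := hzero k
    simp only [e0, e1, sub_zero, sub_self] at h1 h2
    linarith [h1, h2]
  -- notation
  have hgG : ∀ k s, gfun H' C k s = Real.exp (-(C*s)) * G k s := fun k s => rfl
  -- derivative of `u ↦ e^{-Cu} G k u`
  have hEd : ∀ k t, HasDerivAt (fun u => Real.exp (-(C*u)) * G k u)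
      (Real.exp (-(C*t)) * (H' k t - C * G k t)) t := by
    intro k t
    have h0 : HasDerivAt (fun u : ℝ => -(C*u)) (-(C*1)) t :=
      ((hasDerivAt_id t).const_mul C).neg
    have h1 := h0.exp.fun_mul (hGd k t)
    refine h1.congr_deriv ?_
    ring
  have hineqG : ∀ k x, 0 ≤ x → H' k x ≤ C * G k x + G (k+1) x := by
    intro k x hx
    rw [hGH k x hx, hGH (k+1) x hx]
    exact hineq k x hx
  -- key induction
  have key : ∀ m : ℕ, ∀ k, ∀ t, 0 ≤ t →
      Real.exp (-(C*t)) * G k t ≤ (1 / (m.factorial : ℝ)) * Lfun H' C m (k+m+1) t := by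
    intro m
    induction m with
    | zero =>
      intro k t ht
      have hm := mono_aux
        (f := fun u => Lfun H' C 0 (k+1) u - Real.exp (-(C*u)) * G k u)
        (f' := fun x => gfun H' C (k+1) x - Real.exp (-(C*x)) * (H' k x - C * G k x))
        (((L_cont hcont 0 (k+1)).continuousOn).sub
          (((Real.continuous_exp.comp (continuous_const.mul continuous_id).neg).mul
            (hGc k)).continuousOn))
        (fun x _ => (L0_deriv hcont (k+1) x).sub (hEd k x))
        (fun x hx => by
          have h1 := hineqG k x hx.le
          have h2 := Real.exp_pos (-(C*x))
          simp only [hgG]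
          nlinarith)
        t ht
      have e0 : Lfun H' C 0 (k+1) 0 = 0 := L_zero (H' := H') (C := C) hcont 0 (k+1)
      simp only [e0, hG0 k, mul_zero, sub_zero, sub_self] at hm
      have : ((Nat.factorial 0 : ℕ) : ℝ) = 1 := by norm_num
      simpa [this] using hm
    | succ m ih =>
      intro k t ht
      have hm := mono_aux
        (f := fun u => (1/((m+1).factorial : ℝ)) * Lfun H' C (m+1) (k+m+2) u
                - Real.exp (-(C*u)) * G k u)
        (f' := fun x => (1/((m+1).factorial : ℝ)) * (((m:ℝ)+1) * Lfun H' C m (k+m+2) x)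
                - Real.exp (-(C*x)) * (H' k x - C * G k x))
        ((continuous_const.mul (L_cont hcont (m+1) (k+m+2))).continuousOn.sub
          (((Real.continuous_exp.comp (continuous_const.mul continuous_id).neg).mul
            (hGc k)).continuousOn))
        (fun x _ => ((L_deriv hcont m (k+m+2) x).const_mul _).sub (hEd k x))
        (fun x hx => by
          have h2 := ih (k+1) x hx.le
          have hidx : (k+1)+m+1 = k+m+2 := by omega
          rw [hidx] at h2
          have h3 : (1/(((m+1).factorial : ℕ) : ℝ)) * (((m:ℝ)+1) * Lfun H' C m (k+m+2) x)
              = (1/((m.factorial : ℕ) : ℝ)) * Lfun H' C m (k+m+2) x := by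
            rw [Nat.factorial_succ]
            have hne : ((m.factorial : ℕ) : ℝ) ≠ 0 := by
              exact_mod_cast m.factorial_ne_zero
            push_cast
            field_simp
          have h4 : Real.exp (-(C*x)) * (H' k x - C * G k x)
              ≤ Real.exp (-(C*x)) * G (k+1) x := by
            have h1 := hineqG k x hx.le
            have h2' := (Real.exp_pos (-(C*x))).le
            apply mul_le_mul_of_nonneg_left _ h2'
            linarith
          simp only [h3]
          linarith)
        t ht
      have e0 : Lfun H' C (m+1) (k+m+2) 0 = 0 := L_zero (H' := H') (C := C) hcont (m+1) (k+m+2)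
      simp only [e0, hG0 k, mul_zero, sub_zero, sub_self] at hm
      have hidx2 : k+(m+1)+1 = k+m+2 := by omega
      rw [hidx2]
      linarith [hm]
  -- conclusion
  intro p hp t ht
  obtain ⟨m, rfl⟩ : ∃ m, p = m + 1 := ⟨p - 1, (Nat.succ_pred_eq_of_pos hp).symm⟩
  have hkey := key m 0 t ht
  have hidx : 0+m+1 = m+1 := by omega
  rw [hidx, hGH 0 t ht] at hkey
  have hint : ∫ s in (0:ℝ)..t, (t-s)^m * Real.exp (C*(t-s)) * H (m+1) s
      = Real.exp (C*t) * Lfun H' C m (m+1) t := by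
    unfold Lfun
    rw [← intervalIntegral.integral_const_mul]
    apply intervalIntegral.integral_congr
    intro s hs
    rw [Set.uIcc_of_le ht] at hs
    simp only [hgG]
    rw [show H (m+1) s = G (m+1) s from (hGH (m+1) s hs.1).symm,
      show C*(t-s) = C*t + -(C*s) by ring, Real.exp_add]
    ring
  have hfacne : ((m.factorial : ℕ) : ℝ) ≠ 0 := by exact_mod_cast m.factorial_ne_zero
  have h6 : Real.exp (C*t) * (Real.exp (-(C*t)) * H 0 t) = H 0 t := by
    rw [← mul_assoc, ← Real.exp_add]
    simp
  have h5 : Real.exp (C*t) * (Real.exp (-(C*t)) * H 0 t)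
      ≤ Real.exp (C*t) * ((1/(m.factorial : ℝ)) * Lfun H' C m (m+1) t) :=
    mul_le_mul_of_nonneg_left hkey (Real.exp_pos _).le
  have hm1 : (m+1) - 1 = m := by omega
  rw [hm1, hint]
  calc H 0 t = Real.exp (C*t) * (Real.exp (-(C*t)) * H 0 t) := h6.symm
    _ ≤ Real.exp (C*t) * ((1/(m.factorial : ℝ)) * Lfun H' C m (m+1) t) := h5
    _ = (1/(m.factorial : ℝ)) * (Real.exp (C*t) * Lfun H' C m (m+1) t) := by ring
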